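/- (Well-definedness of the anthyphairetic definition of proportion, 1(e): equal quotient sequences force equal ratios.) Let a > b > 0 and c > d > 0 be real numbers, let e and f be the anthyphairesis remainder sequences of (a, b) and (c, d) respectively. Assume e n ≠ 0 and f n ≠ 0 for all n : ℕ, and that the quotient sequences agree: ⌊e n / e (n+1)⌋ = ⌊f n / f (n+1)⌋ for all n. Then a / b = c / d. -/

import Mathlib

/-- `e` is the anthyphairesis remainder sequence of the pair `(a, b)`:
`e 0 = a`, `e 1 = b`, and each new remainder is obtained by division with
remainder of `e n` by `e (n+1)` (stopping, i.e. giving `0`, once a remainder vanishes). -/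
def IsAnthSeq (a b : ℝ) (e : ℕ → ℝ) : Prop :=
  e 0 = a ∧ e 1 = b ∧
    ∀ n : ℕ,
      (e (n + 1) ≠ 0 → e (n + 2) = e n - (⌊e n / e (n + 1)⌋ : ℝ) * e (n + 1)) ∧
      (e (n + 1) = 0 → e (n + 2) = 0)

/-- Auxiliary contraction lemma: two continued-fraction-like sequences with
equal floors and values `> 1` must agree at `0`. -/
theorem anth_aux (r s : ℕ → ℝ)
    (hr : ∀ n, 1 < r n) (hs : ∀ n, 1 < s n)
    (hcr : ∀ n, r n = (⌊r n⌋ : ℝ) + 1 / r (n + 1))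
    (hcs : ∀ n, s n = (⌊s n⌋ : ℝ) + 1 / s (n + 1))
    (hfl : ∀ n, ⌊r n⌋ = ⌊s n⌋) : r 0 = s 0 := by
  have hrpos : ∀ n, 0 < r n := fun n => lt_trans one_pos (hr n)
  have hspos : ∀ n, 0 < s n := fun n => lt_trans one_pos (hs n)
  set D : ℕ → ℝ := fun n => |r n - s n| with hD
  have hD1 : ∀ n, D n < 1 := by
    intro n
    have h1 := Int.lt_floor_add_one (r n)
    have h2 := Int.floor_le (r n)
    have h3 := Int.lt_floor_add_one (s n)
    have h4 := Int.floor_le (s n)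
    have h5 : ((⌊r n⌋ : ℝ)) = ((⌊s n⌋ : ℝ)) := by exact_mod_cast congrArg Int.cast (hfl n)
    rw [hD, abs_sub_lt_iff]
    constructor <;> linarith
  have hD0 : ∀ n, 0 ≤ D n := fun n => abs_nonneg _
  have hstep : ∀ n, D n = D (n + 1) / (r (n + 1) * s (n + 1)) := by
    intro n
    have h5 : ((⌊r n⌋ : ℝ)) = ((⌊s n⌋ : ℝ)) := by exact_mod_cast congrArg Int.cast (hfl n)
    have hrr := (hrpos (n + 1)).ne'
    have hss := (hspos (n + 1)).ne'
    have key : r n - s n = (s (n + 1) - r (n + 1)) / (r (n + 1) * s (n + 1)) := by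
      rw [hcr n, hcs n, h5]
      field_simp
      ring
    rw [hD]
    simp only
    rw [key, abs_div, abs_of_pos (mul_pos (hrpos (n + 1)) (hspos (n + 1))), abs_sub_comm]
  have hfl1 : ∀ n, (1 : ℝ) ≤ (⌊r n⌋ : ℝ) := by
    intro n
    have : (1 : ℤ) ≤ ⌊r n⌋ := Int.le_floor.mpr (by exact_mod_cast (hr n).le)
    exact_mod_cast this
  have hsl1 : ∀ n, (1 : ℝ) ≤ (⌊s n⌋ : ℝ) := by
    intro n
    have : (1 : ℤ) ≤ ⌊s n⌋ := Int.le_floor.mpr (by exact_mod_cast (hs n).le)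
    exact_mod_cast this
  have hprod_r : ∀ n, 2 < r n * r (n + 1) := by
    intro n
    have h1 := hcr n
    have h2 := hfl1 n
    have h3 := hrpos (n + 1)
    have h4 := hr (n + 1)
    have : r n ≥ 1 + 1 / r (n + 1) := by rw [h1]; linarith
    have h5 : 1 / r (n + 1) * r (n + 1) = 1 := by field_simp
    nlinarith
  have hprod_s : ∀ n, 2 < s n * s (n + 1) := by
    intro n
    have h1 := hcs n
    have h2 := hsl1 n
    have h3 := hspos (n + 1)
    have h4 := hs (n + 1)
    have : s n ≥ 1 + 1 / s (n + 1) := by rw [h1]; linarith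
    have h5 : 1 / s (n + 1) * s (n + 1) = 1 := by field_simp
    nlinarith
  have hquarter : ∀ n, D n ≤ D (n + 2) / 4 := by
    intro n
    have h1 := hstep n
    have h2 := hstep (n + 1)
    have hp1 : 0 < r (n + 1) * s (n + 1) := mul_pos (hrpos _) (hspos _)
    have hp2 : 0 < r (n + 2) * s (n + 2) := mul_pos (hrpos _) (hspos _)
    have hbig : 4 < (r (n + 1) * s (n + 1)) * (r (n + 2) * s (n + 2)) := by
      have := hprod_r (n + 1)
      have := hprod_s (n + 1)
      nlinarith [hrpos (n+1), hspos (n+1), hrpos (n+2), hspos (n+2)]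
    have heq : D n = D (n + 2) / ((r (n + 2) * s (n + 2)) * (r (n + 1) * s (n + 1))) := by
      rw [h1, h2, div_div]
    rw [heq]
    apply div_le_div_of_nonneg_left (hD0 _) (by norm_num) (by nlinarith)
  have hmain : ∀ m : ℕ, D 0 ≤ D (2 * m) / 4 ^ m := by
    intro m
    induction m with
    | zero => simp
    | succ k ih =>
      have h1 := hquarter (2 * k)
      have h2 : 2 * k + 2 = 2 * (k + 1) := by ring
      rw [h2] at h1
      calc D 0 ≤ D (2 * k) / 4 ^ k := ih
        _ ≤ (D (2 * (k + 1)) / 4) / 4 ^ k := by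
            apply div_le_div_of_nonneg_right _ (by positivity)
            exact h1
        _ = D (2 * (k + 1)) / 4 ^ (k + 1) := by rw [pow_succ]; ring
  have hDzero : D 0 = 0 := by
    by_contra h
    have hpos : 0 < D 0 := lt_of_le_of_ne (hD0 0) (Ne.symm h)
    obtain ⟨m, hm⟩ := exists_pow_lt_of_lt_one hpos (by norm_num : (1 : ℝ) / 4 < 1)
    have : D 0 ≤ (1 / 4 : ℝ) ^ m := by
      calc D 0 ≤ D (2 * m) / 4 ^ m := hmain m
        _ ≤ 1 / 4 ^ m := by
            apply div_le_div_of_nonneg_right _ (by positivity)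
            exact (hD1 _).le
        _ = (1 / 4 : ℝ) ^ m := by rw [div_pow, one_pow]
    linarith
  have := abs_eq_zero.mp hDzero
  linarith [sub_eq_zero.mp this]

/-- Well-definedness of the anthyphairetic definition of proportion: if the
(everywhere defined) quotient sequences of `(a, b)` and `(c, d)` agree, then
`a / b = c / d`. -/
theorem anthyphairesis_quotients_determine_ratio
    (a b c d : ℝ) (hb : 0 < b) (hab : b < a) (hd : 0 < d) (hcd : d < c)
    (e f : ℕ → ℝ) (he : IsAnthSeq a b e) (hf : IsAnthSeq c d f)
    (hene : ∀ n : ℕ, e n ≠ 0) (hfne : ∀ n : ℕ, f n ≠ 0)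
    (hq : ∀ n : ℕ, ⌊e n / e (n + 1)⌋ = ⌊f n / f (n + 1)⌋) :
    a / b = c / d := by
  obtain ⟨he0, he1, herec⟩ := he
  obtain ⟨hf0, hf1, hfrec⟩ := hf
  -- positivity and strict decrease of remainders
  have key : ∀ (g : ℕ → ℝ), g 1 > 0 → g 1 < g 0 → (∀ n, g n ≠ 0) →
      (∀ n, g (n + 1) ≠ 0 → g (n + 2) = g n - (⌊g n / g (n + 1)⌋ : ℝ) * g (n + 1)) →
      ∀ n, 0 < g (n + 1) ∧ g (n + 1) < g n := by
    intro g h1 h2 hne hrec n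
    induction n with
    | zero => exact ⟨h1, h2⟩
    | succ k ih =>
      obtain ⟨hk1, hk2⟩ := ih
      have hrec' := hrec k (hk1.ne')
      have hfr : g (k + 2) = Int.fract (g k / g (k + 1)) * g (k + 1) := by
        rw [hrec', Int.fract]
        field_simp
      have hge : 0 ≤ g (k + 2) := by
        rw [hfr]; exact mul_nonneg (Int.fract_nonneg _) hk1.le
      have hpos : 0 < g (k + 2) := lt_of_le_of_ne hge (Ne.symm (hne (k + 2)))
      have hlt : g (k + 2) < g (k + 1) := by
        rw [hfr]
        calc Int.fract (g k / g (k + 1)) * g (k + 1) < 1 * g (k + 1) :=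
              mul_lt_mul_of_pos_right (Int.fract_lt_one _) hk1
          _ = g (k + 1) := one_mul _
      exact ⟨hpos, hlt⟩
  have hekey := key e (he1 ▸ hb) (by rw [he0, he1]; exact hab) hene (fun n h => (herec n).1 h)
  have hfkey := key f (hf1 ▸ hd) (by rw [hf0, hf1]; exact hcd) hfne (fun n h => (hfrec n).1 h)
  have hepos : ∀ n, 0 < e n := by
    intro n
    cases n with
    | zero => rw [he0]; linarith
    | succ k => exact (hekey k).1
  have hfpos : ∀ n, 0 < f n := by
    intro n
    cases n with
    | zero => rw [hf0]; linarith
    | succ k => exact (hfkey k).1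
  set r : ℕ → ℝ := fun n => e n / e (n + 1) with hrdef
  set s : ℕ → ℝ := fun n => f n / f (n + 1) with hsdef
  have hr1 : ∀ n, 1 < r n := by
    intro n
    have := (hekey n).2
    exact (one_lt_div (hepos (n + 1))).mpr (by
      cases n with
      | zero => rw [hrdef] at *; exact this
      | succ k => exact this)
  have hs1 : ∀ n, 1 < s n := by
    intro n
    have := (hfkey n).2
    exact (one_lt_div (hfpos (n + 1))).mpr this
  have hcr : ∀ n, r n = (⌊r n⌋ : ℝ) + 1 / r (n + 1) := by
    intro n
    have hrec' := (herec n).1 (hepos (n + 1)).ne'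
    have h1 := (hepos (n + 1)).ne'
    have h2 := (hepos (n + 2)).ne'
    simp only [hrdef]
    rw [one_div_div]
    set q : ℝ := (⌊e n / e (n + 1)⌋ : ℝ) with hqe
    rw [hrec']
    field_simp
    ring
  have hcs : ∀ n, s n = (⌊s n⌋ : ℝ) + 1 / s (n + 1) := by
    intro n
    have hrec' := (hfrec n).1 (hfpos (n + 1)).ne'
    have h1 := (hfpos (n + 1)).ne'
    have h2 := (hfpos (n + 2)).ne'
    simp only [hsdef]
    rw [one_div_div]
    set q : ℝ := (⌊f n / f (n + 1)⌋ : ℝ) with hqe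
    rw [hrec']
    field_simp
    ring
  have h0 := anth_aux r s hr1 hs1 hcr hcs (fun n => hq n)
  simp only [hrdef, hsdef] at h0
  rw [he0, he1] at h0
  rw [hf0, hf1] at h0
  exact h0
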